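/- Let n = p₁⋯p_k be a square-free positive integer with all p_i ≡ ±1 mod 8 and n ≡ 1 mod 8, and let A ∈ M_k(𝔽₂) be the matrix with entries A_{ij} equal to the additive Hilbert symbol [p_j, -n]_{p_i} (taking [p_i, -n]_{p_i} on the diagonal). Let D_{-1} = diag of the additive Legendre symbols [-1/p_i]. Then for any vector d = (s₁,…,s_k)ᵀ ∈ 𝔽₂^k corresponding to d = p₁^{s₁}⋯p_k^{s_k}, one has d ∈ Ker(A + D_{-1}) if and only if d + (-1/d)·𝟏 ∈ Ker(Aᵀ), where (-1/d) ∈ 𝔽₂ is the additive Jacobi symbol and 𝟏 is the all-ones vector. -/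

import Mathlib

open Matrix

open Classical in
/-- Additive Legendre symbol: 0 if `a` is a quadratic residue mod the prime `p`
(Legendre symbol 1), 1 otherwise; junk value 0 if `p` is not prime. -/
noncomputable def addLeg (p : ℕ) (a : ℤ) : ZMod 2 :=
  if h : p.Prime then
    haveI : Fact p.Prime := ⟨h⟩
    if legendreSym p a = 1 then 0 else 1
  else 0

open Classical in
/-- Additive Hilbert symbol [u, v]_p ∈ 𝔽₂: 0 iff z² = ux² + vy² has a nontrivial
solution over ℚ_p; junk value 0 if `p` is not prime. -/
noncomputable def addHilb (p : ℕ) (u v : ℤ) : ZMod 2 :=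
  if h : p.Prime then
    haveI : Fact p.Prime := ⟨h⟩
    if ∃ x y z : ℚ_[p], ¬(x = 0 ∧ y = 0 ∧ z = 0) ∧
        z ^ 2 = (u : ℚ_[p]) * x ^ 2 + (v : ℚ_[p]) * y ^ 2 then 0 else 1
  else 0


section Helpers

variable {p : ℕ} [hfp : Fact p.Prime]


lemma norm_int_eq_one' {u : ℤ} (h : ¬((p:ℤ) ∣ u)) : ‖(u : ℚ_[p])‖ = 1 := by
  have h1 : ‖(u : ℚ_[p])‖ ≤ 1 := Padic.norm_int_le_one u
  have h2 : ¬ ‖(u : ℚ_[p])‖ < 1 := by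
    rw [Padic.norm_intCast_lt_one_iff]; exact h
  linarith [lt_or_eq_of_le h1]

lemma isSquare_of_near {t : ℚ_[p]} {u : ℤ} (ht : ‖t‖ = 1) (h : ‖t^2 - u‖ < 1) :
    IsSquare ((u : ZMod p)) := by
  have ht1 : ‖t‖ ≤ 1 := le_of_eq ht
  set s : ℤ_[p] := ⟨t, ht1⟩ with hs
  have hsu : ‖s^2 - (u : ℤ_[p])‖ < 1 := by
    show ‖((s^2 - (u:ℤ_[p]) : ℤ_[p]) : ℚ_[p])‖ < 1
    push_cast
    exact h
  have hker : PadicInt.toZMod (s^2 - (u : ℤ_[p])) = 0 := by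
    have : s^2 - (u:ℤ_[p]) ∈ RingHom.ker (PadicInt.toZMod : ℤ_[p] →+* ZMod p) := by
      rw [PadicInt.ker_toZMod]
      rw [IsLocalRing.mem_maximalIdeal, PadicInt.mem_nonunits]
      exact hsu
    exact this
  have : (PadicInt.toZMod s)^2 = (u : ZMod p) := by
    have := hker
    rw [map_sub, map_pow, map_intCast, sub_eq_zero] at this
    exact this
  exact ⟨PadicInt.toZMod s, by rw [← this]; ring⟩

lemma exists_sqrt (hp2 : p ≠ 2) {u : ℤ} (h : IsSquare ((u : ZMod p))) (h0 : (u : ZMod p) ≠ 0) :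
    ∃ t : ℚ_[p], t^2 = (u : ℚ_[p]) := by
  obtain ⟨s, hs⟩ := h
  have hs0 : s ≠ 0 := by rintro rfl; simp at hs; exact h0 hs
  set a : ℤ_[p] := ((s.val : ℤ) : ℤ_[p]) with ha
  have hdvd : (p : ℤ) ∣ ((s.val:ℤ)^2 - u) := by
    have : (((s.val:ℤ)^2 - u : ℤ) : ZMod p) = 0 := by
      push_cast [ZMod.natCast_val, ZMod.intCast_cast, ZMod.cast_id]
      rw [hs]; ring
    exact (ZMod.intCast_zmod_eq_zero_iff_dvd _ p).mp this
  have hnorm_ev : ‖a^2 - (u:ℤ_[p])‖ < 1 := by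
    have : a^2 - (u:ℤ_[p]) = (((s.val:ℤ)^2 - u : ℤ) : ℤ_[p]) := by rw [ha]; push_cast; ring
    rw [this, PadicInt.norm_int_lt_one_iff_dvd]
    exact_mod_cast hdvd
  have hanorm : ‖a‖ = 1 := by
    rcases lt_or_eq_of_le (PadicInt.norm_le_one a) with hlt | heq
    · exfalso
      rw [PadicInt.norm_int_lt_one_iff_dvd] at hlt
      have hdv : p ∣ s.val := by exact_mod_cast hlt
      have : (s.val : ZMod p) = 0 := (ZMod.natCast_eq_zero_iff _ _).mpr hdv
      rw [ZMod.natCast_val, ZMod.cast_id] at this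
      exact hs0 this
    · exact heq
  set F : Polynomial ℤ_[p] := Polynomial.X^2 - Polynomial.C (u:ℤ_[p]) with hF
  have hFeval : ∀ z : ℤ_[p], F.eval z = z^2 - u := by
    intro z; simp [hF]
  have hFder : F.derivative = Polynomial.C 2 * Polynomial.X := by
    simp [hF, Polynomial.derivative_pow]
  have hFdeval : ∀ z : ℤ_[p], F.derivative.eval z = 2 * z := by
    intro z; rw [hFder]; simp
  have h2norm : ‖(2 : ℤ_[p])‖ = 1 := by
    have : ¬ ((p:ℤ) ∣ 2) := by
      intro hd
      have hd' : p ∣ 2 := by exact_mod_cast hd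
      have := (Nat.prime_dvd_prime_iff_eq hfp.out Nat.prime_two).mp hd'
      exact hp2 this
    have h2 : ((2:ℤ) : ℤ_[p]) = (2 : ℤ_[p]) := by push_cast; ring
    rcases lt_or_eq_of_le (PadicInt.norm_le_one (2:ℤ_[p])) with hlt | heq
    · exfalso
      rw [← h2, PadicInt.norm_int_lt_one_iff_dvd] at hlt
      exact this hlt
    · exact heq
  have hderiv_norm : ‖F.derivative.eval a‖ = 1 := by
    rw [hFdeval, norm_mul, h2norm, hanorm, one_mul]
  have hhyp : ‖F.eval a‖ < ‖F.derivative.eval a‖^2 := by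
    rw [hFeval, hderiv_norm, one_pow]
    exact hnorm_ev
  obtain ⟨z, hz, -⟩ := hensels_lemma hhyp
  rw [Polynomial.coe_aeval_eq_eval, hFeval, sub_eq_zero] at hz
  refine ⟨(z : ℚ_[p]), ?_⟩
  have := congrArg (fun w : ℤ_[p] => (w : ℚ_[p])) hz
  push_cast at this
  exact this


lemma sq_norm_ne {x y : ℚ_[p]} (hy : y ≠ 0) : ‖x‖^2 ≠ (p:ℝ)⁻¹ * ‖y‖^2 := by
  have hp1 : (1:ℝ) < p := by exact_mod_cast hfp.out.one_lt
  have hp0 : (0:ℝ) < p := lt_trans zero_lt_one hp1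
  by_cases hx : x = 0
  · subst hx
    simp only [norm_zero, ne_eq]
    intro hh
    have : (0:ℝ) < (p:ℝ)⁻¹ * ‖y‖^2 := by
      have := norm_pos_iff.mpr hy
      positivity
    rw [← hh] at this
    simp at this
  · rw [Padic.norm_eq_zpow_neg_valuation hx, Padic.norm_eq_zpow_neg_valuation hy]
    intro hh
    have e1 : ((p:ℝ)^(-x.valuation))^2 = (p:ℝ)^(-x.valuation + -x.valuation) := by
      rw [zpow_add₀ (ne_of_gt hp0)]; ring
    have e2 : (p:ℝ)⁻¹ * ((p:ℝ)^(-y.valuation))^2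
        = (p:ℝ)^((-1) + (-y.valuation + -y.valuation)) := by
      rw [zpow_add₀ (ne_of_gt hp0), zpow_add₀ (ne_of_gt hp0)]
      rw [_root_.zpow_neg_one]; ring
    rw [e1, e2] at hh
    have := zpow_right_injective₀ hp0 (ne_of_gt hp1) hh
    omega

lemma not_solvable_unit {u w : ℤ} (hns : ¬ IsSquare ((u : ZMod p)))
    (hu0 : (u : ZMod p) ≠ 0) (hw0 : (w : ZMod p) ≠ 0) {x y z : ℚ_[p]}
    (h : z^2 = (u:ℚ_[p]) * x^2 + (p:ℚ_[p]) * (w:ℚ_[p]) * y^2) :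
    x = 0 ∧ y = 0 ∧ z = 0 := by
  have hu' : ¬ ((p:ℤ) ∣ u) := by
    rw [← ZMod.intCast_zmod_eq_zero_iff_dvd]; exact hu0
  have hw' : ¬ ((p:ℤ) ∣ w) := by
    rw [← ZMod.intCast_zmod_eq_zero_iff_dvd]; exact hw0
  have hnu : ‖(u:ℚ_[p])‖ = 1 := norm_int_eq_one' hu'
  have hnw : ‖(w:ℚ_[p])‖ = 1 := norm_int_eq_one' hw'
  have hnp : ‖(p:ℚ_[p])‖ = (p:ℝ)⁻¹ := Padic.norm_p
  have hA : ‖(u:ℚ_[p])*x^2‖ = ‖x‖^2 := by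
    rw [norm_mul, hnu, one_mul, norm_pow]
  have hB : ‖(p:ℚ_[p])*(w:ℚ_[p])*y^2‖ = (p:ℝ)⁻¹ * ‖y‖^2 := by
    rw [norm_mul, norm_mul, hnp, hnw, mul_one, norm_pow]
  have hx : x = 0 := by
    by_contra hx
    have hxpos : (0:ℝ) < ‖x‖^2 := by
      have := norm_pos_iff.mpr hx; positivity
    rcases lt_trichotomy (‖(u:ℚ_[p])*x^2‖) (‖(p:ℚ_[p])*(w:ℚ_[p])*y^2‖) with hlt | heq | hgt
    · have hy : y ≠ 0 := by
        intro hy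
        rw [hy, hA] at hlt
        have he0 : (p:ℚ_[p])*(w:ℚ_[p])*(0:ℚ_[p])^2 = 0 := by ring
        rw [he0, norm_zero] at hlt
        linarith
      have hzn : ‖z‖^2 = (p:ℝ)⁻¹ * ‖y‖^2 := by
        rw [← norm_pow, h, Padic.add_eq_max_of_ne (ne_of_lt hlt),
          max_eq_right (le_of_lt hlt), hB]
      exact sq_norm_ne hy hzn
    · have hy : y ≠ 0 := by
        intro hy; rw [hy] at heq; rw [hA] at heq; simp [hB] at heq
        rw [heq] at hxpos; simp at hxpos
      rw [hA, hB] at heq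
      exact sq_norm_ne hy heq
    · have hzn : ‖z‖ = ‖x‖ := by
        have : ‖z‖^2 = ‖x‖^2 := by
          rw [← norm_pow, h, Padic.add_eq_max_of_ne (ne_of_gt hgt),
            max_eq_left (le_of_lt hgt), hA]
        nlinarith [norm_nonneg z, norm_nonneg x]
      have hz0 : z ≠ 0 := by
        intro hz; rw [hz, norm_zero] at hzn
        exact hx (norm_eq_zero.mp hzn.symm)
      set t : ℚ_[p] := z / x with ht
      have htn : ‖t‖ = 1 := by
        rw [ht, norm_div, hzn, div_self (ne_of_gt (norm_pos_iff.mpr hx))]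
      have htu : t^2 - (u:ℚ_[p]) = (p:ℚ_[p]) * (w:ℚ_[p]) * (y/x)^2 := by
        rw [ht]
        field_simp
        linear_combination h
      have hnorm_eq : ‖t^2 - (u:ℚ_[p])‖ = ((p:ℝ)⁻¹ * ‖y‖^2) / ‖x‖^2 := by
        rw [htu, norm_mul, norm_mul, hnp, hnw, mul_one, norm_pow, norm_div, div_pow]
        ring
      have hlt1 : ‖t^2 - (u:ℚ_[p])‖ < 1 := by
        rw [hnorm_eq, div_lt_one hxpos]
        rw [hA, hB] at hgt
        exact hgt
      exact hns (isSquare_of_near htn hlt1)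
  subst hx
  have hy : y = 0 := by
    by_contra hy
    have hzn : ‖z‖^2 = (p:ℝ)⁻¹ * ‖y‖^2 := by
      rw [← norm_pow, h]
      have he : (u:ℚ_[p])*(0:ℚ_[p])^2 + (p:ℚ_[p])*(w:ℚ_[p])*y^2
          = (p:ℚ_[p])*(w:ℚ_[p])*y^2 := by ring
      rw [he, hB]
    exact sq_norm_ne hy hzn
  subst hy
  refine ⟨rfl, rfl, ?_⟩
  have : z^2 = 0 := by rw [h]; ring
  exact pow_eq_zero_iff (by norm_num) |>.mp this

lemma not_solvable_p {w : ℤ} (hw0 : (w : ZMod p) ≠ 0)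
    (hns : ¬ IsSquare (((-w : ℤ) : ZMod p))) {x y z : ℚ_[p]}
    (h : z^2 = (p:ℚ_[p]) * x^2 + (p:ℚ_[p]) * (w:ℚ_[p]) * y^2) :
    x = 0 ∧ y = 0 ∧ z = 0 := by
  have hw' : ¬ ((p:ℤ) ∣ w) := by
    rw [← ZMod.intCast_zmod_eq_zero_iff_dvd]; exact hw0
  have hnw : ‖(w:ℚ_[p])‖ = 1 := norm_int_eq_one' hw'
  have hnp : ‖(p:ℚ_[p])‖ = (p:ℝ)⁻¹ := Padic.norm_p
  have hB : ‖(w:ℚ_[p])*y^2‖ = ‖y‖^2 := by rw [norm_mul, hnw, one_mul, norm_pow]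
  have hmax : ‖x^2 + (w:ℚ_[p])*y^2‖ = max (‖x‖^2) (‖y‖^2) := by
    by_cases hne : ‖x^2‖ = ‖(w:ℚ_[p])*y^2‖
    · by_cases hy : y = 0
      · subst hy
        have hx0 : x = 0 := by
          have : ‖x^2‖ = 0 := by
            rw [hne]
            have : (w:ℚ_[p])*(0:ℚ_[p])^2 = 0 := by ring
            rw [this, norm_zero]
          have := norm_eq_zero.mp this
          exact pow_eq_zero_iff (by norm_num) |>.mp this
        subst hx0
        simp
      · have hy' : (0:ℝ) < ‖y‖ := norm_pos_iff.mpr hy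
        have hx : x ≠ 0 := by
          intro hx; subst hx
          rw [norm_pow] at hne
          simp only [norm_zero] at hne
          rw [hB] at hne
          nlinarith
        have hxy : ‖x‖ = ‖y‖ := by
          rw [norm_pow, hB] at hne
          nlinarith [norm_nonneg x, norm_nonneg y]
        set t : ℚ_[p] := x / y with ht
        have htn : ‖t‖ = 1 := by
          rw [ht, norm_div, hxy, div_self (ne_of_gt hy')]
        have hle1 : ‖t^2 + (w:ℚ_[p])‖ ≤ 1 := by
          calc ‖t^2 + (w:ℚ_[p])‖ ≤ max ‖t^2‖ ‖(w:ℚ_[p])‖ := Padic.nonarchimedean _ _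
          _ ≤ 1 := by rw [norm_pow, htn, hnw]; norm_num
        have hkey : ‖t^2 + (w:ℚ_[p])‖ = 1 := by
          rcases lt_or_eq_of_le hle1 with hlt | heq
          · exfalso
            apply hns
            apply isSquare_of_near htn
            have : t^2 - (((-w : ℤ)) : ℚ_[p]) = t^2 + (w:ℚ_[p]) := by push_cast; ring
            rw [this]
            exact hlt
          · exact heq
        have hfac : x^2 + (w:ℚ_[p])*y^2 = y^2 * (t^2 + (w:ℚ_[p])) := by
          rw [ht]; field_simp
        rw [hfac, norm_mul, norm_pow, hkey, mul_one]
        rw [show max (‖x‖^2) (‖y‖^2) = ‖y‖^2 by rw [hxy, max_self]]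
    · rw [Padic.add_eq_max_of_ne hne, norm_pow, hB]
  have hxy0 : x = 0 ∧ y = 0 := by
    by_contra hc
    have hfac : z^2 = (p:ℚ_[p]) * (x^2 + (w:ℚ_[p])*y^2) := by rw [h]; ring
    have hzn : ‖z‖^2 = (p:ℝ)⁻¹ * max (‖x‖^2) (‖y‖^2) := by
      rw [← norm_pow, hfac, norm_mul, hnp, hmax]
    rcases max_cases (‖x‖^2) (‖y‖^2) with ⟨hm, hle⟩ | ⟨hm, hlt⟩
    · have hx : x ≠ 0 := by
        intro hx; subst hx
        apply hc
        refine ⟨rfl, ?_⟩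
        simp only [norm_zero, ne_eq, OfNat.ofNat_ne_zero, not_false_iff, zero_pow] at hle
        have := norm_nonneg y
        have : ‖y‖ = 0 := by nlinarith
        exact norm_eq_zero.mp this
      rw [hm] at hzn
      exact sq_norm_ne hx hzn
    · have hy : y ≠ 0 := by
        intro hy; subst hy
        simp only [norm_zero, ne_eq, OfNat.ofNat_ne_zero, not_false_iff, zero_pow] at hlt
        nlinarith [norm_nonneg x]
      rw [hm] at hzn
      exact sq_norm_ne hy hzn
  obtain ⟨hx, hy⟩ := hxy0
  subst hx; subst hy
  refine ⟨rfl, rfl, ?_⟩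
  have : z^2 = 0 := by rw [h]; ring
  exact pow_eq_zero_iff (by norm_num) |>.mp this

lemma addLeg_eq (a : ℤ) : addLeg p a = if legendreSym p a = 1 then (0 : ZMod 2) else 1 := by
  rw [addLeg, dif_pos hfp.out]

open Classical in
lemma addHilb_eq (u v : ℤ) : addHilb p u v =
    if ∃ x y z : ℚ_[p], ¬(x = 0 ∧ y = 0 ∧ z = 0) ∧
        z ^ 2 = (u : ℚ_[p]) * x ^ 2 + (v : ℚ_[p]) * y ^ 2 then (0 : ZMod 2) else 1 := by
  rw [addHilb, dif_pos hfp.out]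

lemma addHilb_unit (hp2 : p ≠ 2) {u w : ℤ} (hu0 : (u : ZMod p) ≠ 0)
    (hw0 : (w : ZMod p) ≠ 0) : addHilb p u ((p : ℤ) * w) = addLeg p u := by
  rw [addHilb_eq, addLeg_eq]
  by_cases hsq : IsSquare ((u : ZMod p))
  · rw [if_pos, if_pos ((legendreSym.eq_one_iff p hu0).mpr hsq)]
    obtain ⟨t, ht⟩ := exists_sqrt hp2 hsq hu0
    refine ⟨1, 0, t, by norm_num, ?_⟩
    push_cast
    rw [ht]; ring
  · rw [if_neg, if_neg]
    · rw [legendreSym.eq_one_iff p hu0]; exact hsq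
    · rintro ⟨x, y, z, hnt, heq⟩
      apply hnt
      apply not_solvable_unit hsq hu0 hw0
      push_cast at heq
      convert heq using 2 <;> ring


lemma addHilb_p (hp2 : p ≠ 2) {w : ℤ} (hw0 : (w : ZMod p) ≠ 0) :
    addHilb p (p : ℤ) ((p : ℤ) * w) = addLeg p (-w) := by
  have hnw0 : (((-w : ℤ)) : ZMod p) ≠ 0 := by
    push_cast
    exact neg_ne_zero.mpr hw0
  rw [addHilb_eq, addLeg_eq]
  by_cases hsq : IsSquare (((-w : ℤ) : ZMod p))
  · rw [if_pos, if_pos ((legendreSym.eq_one_iff p hnw0).mpr hsq)]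
    obtain ⟨t, ht⟩ := exists_sqrt hp2 hsq hnw0
    refine ⟨t, 1, 0, by norm_num, ?_⟩
    push_cast
    push_cast at ht
    rw [ht]; ring
  · rw [if_neg, if_neg]
    · rw [legendreSym.eq_one_iff p hnw0]; exact hsq
    · rintro ⟨x, y, z, hnt, heq⟩
      apply hnt
      apply not_solvable_p hw0 hsq
      push_cast at heq
      convert heq using 2 <;> try ring

lemma addLeg_one : addLeg p 1 = 0 := by
  rw [addLeg_eq, if_pos]
  have : legendreSym p 1 = 1 := by
    rw [legendreSym]
    simp
  exact this

lemma addLeg_mul {a b : ℤ} (ha : (a : ZMod p) ≠ 0) (hb : (b : ZMod p) ≠ 0) :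
    addLeg p (a * b) = addLeg p a + addLeg p b := by
  rcases legendreSym.eq_one_or_neg_one p ha with h1 | h1 <;>
    rcases legendreSym.eq_one_or_neg_one p hb with h2 | h2 <;>
      simp [addLeg_eq, legendreSym.mul, h1, h2] <;> decide

lemma addLeg_prod {ι : Type*} (s : Finset ι) (f : ι → ℤ)
    (hf : ∀ j ∈ s, ((f j : ZMod p)) ≠ 0) :
    addLeg p (∏ j ∈ s, f j) = ∑ j ∈ s, addLeg p (f j) := by
  classical
  induction s using Finset.induction_on with
  | empty => simpa using addLeg_one
  | @insert a s' hx ih =>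
    rw [Finset.prod_insert hx, Finset.sum_insert hx]
    have ha : ((f a : ZMod p)) ≠ 0 := hf a (Finset.mem_insert_self a s')
    have hprod : ((∏ j ∈ s', f j : ℤ) : ZMod p) ≠ 0 := by
      push_cast
      exact Finset.prod_ne_zero_iff.mpr fun j hj => hf j (Finset.mem_insert_of_mem hj)
    rw [addLeg_mul ha hprod, ih fun j hj => hf j (Finset.mem_insert_of_mem hj)]

lemma neg_one_ne_zero_zmod (hp2 : p ≠ 2) : (((-1 : ℤ)) : ZMod p) ≠ 0 := by
  push_cast
  rw [neg_ne_zero]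
  exact one_ne_zero

lemma addLeg_neg_one_of_one_mod_four (h : p % 4 = 1) : addLeg p (-1) = 0 := by
  have hp2 : p ≠ 2 := by omega
  rw [addLeg_eq, if_pos]
  rw [legendreSym.eq_one_iff p (neg_one_ne_zero_zmod hp2)]
  push_cast
  rw [ZMod.exists_sq_eq_neg_one_iff]
  omega

lemma addLeg_neg_one_of_three_mod_four (h : p % 4 = 3) : addLeg p (-1) = 1 := by
  have hp2 : p ≠ 2 := by omega
  rw [addLeg_eq, if_neg]
  rw [legendreSym.eq_one_iff p (neg_one_ne_zero_zmod hp2)]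
  push_cast
  rw [ZMod.exists_sq_eq_neg_one_iff]
  omega

lemma addLeg_qr {q : ℕ} [hfq : Fact q.Prime] (hp2 : p ≠ 2) (hq2 : q ≠ 2) (hpq : p ≠ q) :
    addLeg q (p : ℤ) + addLeg p (q : ℤ) = addLeg p (-1) * addLeg q (-1) := by
  have hqp : ((q : ℤ) : ZMod p) ≠ 0 := by
    push_cast
    rw [Ne, ZMod.natCast_eq_zero_iff]
    intro hd
    exact hpq ((Nat.prime_dvd_prime_iff_eq hfp.out hfq.out).mp hd)
  have hpq' : ((p : ℤ) : ZMod q) ≠ 0 := by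
    push_cast
    rw [Ne, ZMod.natCast_eq_zero_iff]
    intro hd
    exact hpq ((Nat.prime_dvd_prime_iff_eq hfq.out hfp.out).mp hd).symm
  have hp4 : p % 4 = 1 ∨ p % 4 = 3 := by
    have := hfp.out.two_le
    have : p % 2 = 1 := (Nat.Prime.mod_two_eq_one_iff_ne_two hfp.out).mpr hp2
    omega
  have hq4 : q % 4 = 1 ∨ q % 4 = 3 := by
    have := hfq.out.two_le
    have : q % 2 = 1 := (Nat.Prime.mod_two_eq_one_iff_ne_two hfq.out).mpr hq2
    omega
  rcases hp4 with hp4 | hp4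
  · have hqr := legendreSym.quadratic_reciprocity_one_mod_four hp4 hq2
    rw [addLeg_neg_one_of_one_mod_four hp4, zero_mul]
    rw [addLeg_eq, addLeg_eq, hqr]
    by_cases h : legendreSym p (q : ℤ) = 1 <;> simp [h] <;> decide
  · rcases hq4 with hq4 | hq4
    · have hqr := legendreSym.quadratic_reciprocity_one_mod_four hq4 hp2
      rw [addLeg_neg_one_of_one_mod_four hq4, mul_zero]
      rw [addLeg_eq, addLeg_eq, hqr]
      by_cases h : legendreSym q (p : ℤ) = 1 <;> simp [h] <;> decide
    · have hqr := legendreSym.quadratic_reciprocity_three_mod_four hp4 hq4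
      rw [addLeg_neg_one_of_three_mod_four hp4, addLeg_neg_one_of_three_mod_four hq4, one_mul]
      rw [addLeg_eq, addLeg_eq, hqr]
      rcases legendreSym.eq_one_or_neg_one p hqp with h | h <;> rw [h] <;> norm_num

open Finset in
lemma prod_f_eq {ι : Type*} (s : Finset ι) (g : ι → ZMod 2) :
    (∏ i ∈ s, (if g i = 0 then (1 : ZMod 8) else 7)) =
      (if (∑ i ∈ s, g i) = 0 then (1 : ZMod 8) else 7) := by
  classical
  induction s using Finset.induction_on with
  | empty => simp
  | @insert a s' hx ih =>
    rw [Finset.prod_insert hx, Finset.sum_insert hx, ih]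
    have : ∀ u v : ZMod 2, ((if u = 0 then (1 : ZMod 8) else 7) *
        (if v = 0 then (1 : ZMod 8) else 7)) = (if u + v = 0 then (1 : ZMod 8) else 7) := by
      decide
    exact this _ _


end Helpers

/-- with all p_i ≡ ±1 mod 8 and n = p₁⋯p_k ≡ 1 mod 8,
d ∈ Ker(A + D₋₁) iff d + (-1/d)·𝟏 ∈ Ker(Aᵀ). -/
theorem stmt8 (k : ℕ) (p : Fin k → ℕ) (hp : ∀ i, (p i).Prime)
    (hinj : Function.Injective p)
    (h8 : ∀ i, p i % 8 = 1 ∨ p i % 8 = 7)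
    (n : ℕ) (hn : n = ∏ i, p i) (hn8 : n % 8 = 1)
    (A : Matrix (Fin k) (Fin k) (ZMod 2))
    (hA : ∀ i j, A i j = addHilb (p i) (p j) (-(n : ℤ)))
    (d : Fin k → ZMod 2) :
    (A + Matrix.diagonal fun i => addLeg (p i) (-1)) *ᵥ d = 0 ↔
      Aᵀ *ᵥ (d + (∑ i, d i * addLeg (p i) (-1)) • fun _ => (1 : ZMod 2)) = 0 := by
  classical
  set b : Fin k → ZMod 2 := fun i => addLeg (p i) (-1) with hb
  set c : ZMod 2 := ∑ i, d i * b i with hc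
  have hp2 : ∀ i, p i ≠ 2 := by
    intro i hi
    rcases h8 i with h | h <;> rw [hi] at h <;> omega
  -- distinct primes: nonvanishing casts
  have hne : ∀ i j : Fin k, i ≠ j → (((p j : ℤ)) : ZMod (p i)) ≠ 0 := by
    intro i j hij
    haveI : Fact (p i).Prime := ⟨hp i⟩
    push_cast
    rw [Ne, ZMod.natCast_eq_zero_iff]
    intro hd
    exact hij (hinj ((Nat.prime_dvd_prime_iff_eq (hp i) (hp j)).mp hd))
  set m : Fin k → ℤ := fun i => ∏ j ∈ Finset.univ.erase i, (p j : ℤ) with hm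
  have hmne : ∀ i, ((m i : ℤ) : ZMod (p i)) ≠ 0 := by
    intro i
    haveI : Fact (p i).Prime := ⟨hp i⟩
    rw [hm]
    push_cast
    refine Finset.prod_ne_zero_iff.mpr fun j hj => ?_
    have hji : i ≠ j := fun h => (Finset.mem_erase.mp hj).1 h.symm
    have := hne i j hji
    push_cast at this
    exact this
  have hfact : ∀ i, -(n : ℤ) = (p i : ℤ) * (-(m i)) := by
    intro i
    have : (n : ℤ) = (p i : ℤ) * m i := by
      rw [hn, hm]
      push_cast
      exact (Finset.mul_prod_erase Finset.univ _ (Finset.mem_univ i)).symm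
    rw [this]; ring
  -- off-diagonal entries
  have F1 : ∀ i j, i ≠ j → A i j = addLeg (p i) (p j) := by
    intro i j hij
    haveI : Fact (p i).Prime := ⟨hp i⟩
    rw [hA, hfact i]
    exact addHilb_unit (hp2 i) (hne i j hij) (by rw [Int.cast_neg, neg_ne_zero]; exact hmne i)
  -- diagonal entries
  have F2 : ∀ i, A i i = addLeg (p i) (m i) := by
    intro i
    haveI : Fact (p i).Prime := ⟨hp i⟩
    rw [hA, hfact i]
    rw [addHilb_p (hp2 i) (by rw [Int.cast_neg, neg_ne_zero]; exact hmne i), neg_neg]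
  -- row sums vanish
  have S1 : ∀ i, ∑ j, A i j = 0 := by
    intro i
    haveI : Fact (p i).Prime := ⟨hp i⟩
    rw [← Finset.add_sum_erase _ _ (Finset.mem_univ i), F2 i]
    have h1 : ∑ j ∈ Finset.univ.erase i, A i j
        = ∑ j ∈ Finset.univ.erase i, addLeg (p i) (p j) := by
      refine Finset.sum_congr rfl fun j hj => ?_
      exact F1 i j fun h => (Finset.mem_erase.mp hj).1 h.symm
    rw [h1, hm, ← addLeg_prod _ _ (fun j hj => hne i j fun h => (Finset.mem_erase.mp hj).1 h.symm)]
    exact CharTwo.add_self_eq_zero _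
  -- symmetry relation
  have hrel : ∀ i j, A j i = A i j + ((if j = i then b i else 0) + b i * b j) := by
    intro i j
    by_cases hij : j = i
    · subst hij
      have : ∀ x y : ZMod 2, x = x + (y + y * y) := by decide
      simpa using this (A j j) (b j)
    · haveI : Fact (p i).Prime := ⟨hp i⟩
      haveI : Fact (p j).Prime := ⟨hp j⟩
      rw [if_neg hij]
      have hqr := addLeg_qr (q := p j) (hp2 i) (hp2 j)
        (fun h => hij (hinj h).symm)
      rw [F1 j i hij, F1 i j (fun h => hij h.symm)]
      have : ∀ x y z : ZMod 2, x + y = z → x = y + (0 + z) := by decide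
      exact this _ _ _ hqr
  -- sum of b vanishes (mod 8 argument)
  have S4 : ∑ j, b j = 0 := by
    have hcast : ∀ i, ((p i : ZMod 8)) = (if b i = 0 then (1 : ZMod 8) else 7) := by
      intro i
      haveI : Fact (p i).Prime := ⟨hp i⟩
      rcases h8 i with h | h
      · have hb0 : b i = 0 := addLeg_neg_one_of_one_mod_four (by omega)
        rw [hb0, if_pos rfl, ← ZMod.natCast_mod, h]
        norm_num
      · have hb1 : b i = 1 := addLeg_neg_one_of_three_mod_four (by omega)
        rw [hb1, if_neg (by decide), ← ZMod.natCast_mod, h]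
        norm_num
    have hn1 : ((n : ZMod 8)) = 1 := by
      rw [← ZMod.natCast_mod, hn8]; norm_num
    have hnprod : ((n : ZMod 8)) = (if (∑ j, b j) = 0 then (1 : ZMod 8) else 7) := by
      rw [hn]
      push_cast
      rw [Finset.prod_congr rfl fun i _ => hcast i]
      exact prod_f_eq _ _
    rw [hn1] at hnprod
    by_contra hne0
    rw [if_neg hne0] at hnprod
    exact absurd hnprod.symm (by decide)
  -- main vector identity
  have key : Aᵀ *ᵥ (d + c • fun _ => (1 : ZMod 2)) = (A + Matrix.diagonal b) *ᵥ d := by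
    funext i
    show ∑ j, Aᵀ i j * (d j + c * 1) = ∑ j, (A + Matrix.diagonal b) i j * d j
    have expand : ∀ j, Aᵀ i j * (d j + c * 1)
        = A i j * d j + c * A i j + (if j = i then b i * (d j + c) else 0)
          + b i * (b j * d j) + (b i * c) * b j := by
      intro j
      rw [Matrix.transpose_apply, hrel i j]
      by_cases hij : j = i
      · rw [if_pos hij, if_pos hij]; ring
      · rw [if_neg hij, if_neg hij]; ring
    rw [Finset.sum_congr rfl fun j _ => expand j]
    rw [Finset.sum_add_distrib, Finset.sum_add_distrib, Finset.sum_add_distrib,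
      Finset.sum_add_distrib]
    rw [← Finset.mul_sum, S1 i, mul_zero]
    rw [← Finset.mul_sum, ← Finset.mul_sum, S4, mul_zero]
    simp only [Finset.sum_ite_eq', Finset.mem_univ, if_true]
    have hcc : ∑ j, b j * d j = c := by
      rw [hc]; exact Finset.sum_congr rfl fun j _ => mul_comm _ _
    rw [hcc]
    have hrhs : ∑ j, (A + Matrix.diagonal b) i j * d j
        = (∑ j, A i j * d j) + b i * d i := by
      have : ∀ j, (A + Matrix.diagonal b) i j * d j
          = A i j * d j + (if j = i then b i * d j else 0) := by
        intro j
        rw [Matrix.add_apply, Matrix.diagonal_apply]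
        by_cases hij : i = j
        · rw [if_pos hij, if_pos hij.symm]; ring
        · rw [if_neg hij, if_neg (fun h => hij h.symm)]; ring
      rw [Finset.sum_congr rfl fun j _ => this j, Finset.sum_add_distrib]
      simp only [Finset.sum_ite_eq', Finset.mem_univ, if_true]
    rw [hrhs]
    have : ∀ S x y z : ZMod 2, S + 0 + x * (y + z) + x * z + 0 = S + x * y := by decide
    exact this _ _ _ _
  constructor
  · intro h
    rw [key]
    exact h
  · intro h
    rw [key] at h
    exact h
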